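/- arXiv:2506.19226 — 2 statements merged into one kernel-verified Lean document; each statement's English description precedes it below -/
import Mathlib

section
/- Let f: Z_N → C with f̂ supported on E ⊆ Z_N, and let M ⊆ Z_N with |E|·|M| < N/2. If g: Z_N → C satisfies g(x) = f(x) for all x ∉ M and ||ĝ||_{L^1(Z_N)} ≤ ||f̂||_{L^1(Z_N)}, then g = f. -/
open Finset

/-- The discrete Fourier transform on `ZMod N`:
`f̂(ω) = N^{-1/2} ∑_x f(x) e^{-2πiωx/N}`. -/
noncomputable def dft {N : ℕ} [NeZero N] (f : ZMod N → ℂ) (ω : ZMod N) : ℂ :=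
  (Real.sqrt N : ℂ)⁻¹ *
    ∑ x : ZMod N, f x * Complex.exp (-(2 * Real.pi * Complex.I) * ((ω.val * x.val : ℕ) : ℂ) / (N : ℂ))

/-- `||u||_{L^1(A)} = ∑_{x ∈ A} |u(x)|`. -/
noncomputable def l1 {N : ℕ} [NeZero N] (A : Finset (ZMod N)) (u : ZMod N → ℂ) : ℝ :=
  ∑ x ∈ A, ‖u x‖

lemma dft_eq_zdft {N : ℕ} [NeZero N] (f : ZMod N → ℂ) (ω : ZMod N) :
    dft f ω = (Real.sqrt N : ℂ)⁻¹ * ZMod.dft f ω := by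
  unfold dft
  rw [ZMod.dft_apply]
  congr 1
  refine Finset.sum_congr rfl fun x _ => ?_
  have key : (ZMod.stdAddChar (-(x * ω)) : ℂ)
      = Complex.exp (-(2 * Real.pi * Complex.I) * ((ω.val * x.val : ℕ) : ℂ) / (N : ℂ)) := by
    have h := ZMod.stdAddChar_coe (N := N) (-(ω.val * x.val : ℤ))
    have harg : ((-(ω.val * x.val : ℤ) : ℤ) : ZMod N) = -(x * ω) := by
      push_cast
      rw [ZMod.natCast_val, ZMod.natCast_val, ZMod.cast_id, ZMod.cast_id]
      ring
    rw [harg] at h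
    rw [h]
    congr 1
    push_cast
    ring
  rw [smul_eq_mul, key, mul_comm]


theorem stmt3 {N : ℕ} [NeZero N] (f g : ZMod N → ℂ) (E M : Finset (ZMod N))
    (hfE : ∀ ω, dft f ω ≠ 0 → ω ∈ E)
    (hEM : (E.card : ℝ) * M.card < N / 2)
    (hagree : ∀ x ∉ M, g x = f x)
    (hmin : l1 univ (dft g) ≤ l1 univ (dft f)) :
    g = f := by
  classical
  have hN : (0 : ℝ) < N := Nat.cast_pos.mpr (Nat.pos_of_ne_zero (NeZero.ne N))
  have hsq : (0 : ℝ) < Real.sqrt N := Real.sqrt_pos.mpr hN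
  set Ff : ZMod N → ℂ := ZMod.dft f with hFf
  set Fg : ZMod N → ℂ := ZMod.dft g with hFg
  set h : ZMod N → ℂ := fun x => g x - f x with hh
  set H : ZMod N → ℂ := ZMod.dft h with hH
  have hHsub : ∀ ω, H ω = Fg ω - Ff ω := by
    intro ω
    have h1 : ZMod.dft (g - f) = ZMod.dft g - ZMod.dft f := map_sub _ _ _
    have h2 : H = ZMod.dft (g - f) := by rw [hH]; congr 1
    rw [h2, h1]; simp [hFf, hFg]
  have hsupp : ∀ x ∉ M, h x = 0 := fun x hx => by simp [hh, hagree x hx]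
  have hFfE : ∀ ω ∉ E, Ff ω = 0 := by
    intro ω hω
    by_contra hne
    refine hω (hfE ω ?_)
    rw [dft_eq_zdft]
    exact mul_ne_zero (inv_ne_zero (by exact_mod_cast hsq.ne')) hne
  have habs : ∀ (u : ZMod N → ℂ), l1 univ (dft u) = (Real.sqrt N)⁻¹ * ∑ ω, ‖ZMod.dft u ω‖ := by
    intro u
    rw [l1, Finset.mul_sum]
    refine Finset.sum_congr rfl fun ω _ => ?_
    rw [dft_eq_zdft, norm_mul, norm_inv]
    norm_num [Complex.norm_real, abs_of_pos hsq]
  have hmin' : ∑ ω, ‖Fg ω‖ ≤ ∑ ω, ‖Ff ω‖ := by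
    rw [habs, habs] at hmin
    exact le_of_mul_le_mul_left hmin (inv_pos.mpr hsq)
  set T : ℝ := ∑ x ∈ M, ‖h x‖ with hT
  set S : ℝ := ∑ ω, ‖H ω‖ with hS
  set A : ℝ := ∑ ω ∈ E, ‖H ω‖ with hA
  set B : ℝ := ∑ ω ∈ univ \ E, ‖H ω‖ with hB
  have hSAB : B + A = S := by
    rw [hS, hA, hB]; exact Finset.sum_sdiff (subset_univ E)
  -- Step 1 : B ≤ A
  have step1 : B ≤ A := by
    have e1 : ∑ ω, ‖Fg ω‖
        = ∑ ω ∈ univ \ E, ‖Fg ω‖ + ∑ ω ∈ E, ‖Fg ω‖ :=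
      (Finset.sum_sdiff (subset_univ E)).symm
    have e2 : ∑ ω, ‖Ff ω‖ = ∑ ω ∈ E, ‖Ff ω‖ := by
      rw [← Finset.sum_sdiff (subset_univ E)]
      have : ∑ ω ∈ univ \ E, ‖Ff ω‖ = 0 := by
        refine Finset.sum_eq_zero fun ω hω => ?_
        rw [hFfE ω (Finset.mem_sdiff.mp hω).2]; simp
      rw [this, zero_add]
    have e3 : ∑ ω ∈ univ \ E, ‖Fg ω‖ = B := by
      rw [hB]
      refine Finset.sum_congr rfl fun ω hω => ?_
      rw [hHsub, hFfE ω (Finset.mem_sdiff.mp hω).2, sub_zero]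
    have e4 : ∑ ω ∈ E, ‖Ff ω‖ - A ≤ ∑ ω ∈ E, ‖Fg ω‖ := by
      rw [hA, ← Finset.sum_sub_distrib]
      refine Finset.sum_le_sum fun ω _ => ?_
      have hfe : Ff ω = Fg ω - H ω := by rw [hHsub]; ring
      have tri : ‖Ff ω‖ ≤ ‖Fg ω‖ + ‖H ω‖ := by
        rw [hfe]
        exact norm_sub_le _ _
      linarith
    linarith [hmin', e1, e2, e3, e4]
  -- Step 2 : each |H ω| ≤ T
  have step2 : ∀ ω, ‖H ω‖ ≤ T := by
    intro ω
    have hsum : H ω = ∑ x ∈ M, ZMod.stdAddChar (-(x * ω)) • h x := by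
      rw [hH, ZMod.dft_apply]
      exact (Finset.sum_subset (subset_univ M) (fun x _ hx => by rw [hsupp x hx, smul_zero])).symm
    rw [hsum, hT]
    refine (norm_sum_le _ _).trans (Finset.sum_le_sum fun x _ => ?_)
    rw [smul_eq_mul, norm_mul, ZMod.stdAddChar_apply, Circle.norm_coe, one_mul]
  -- Step 3 : each |h x| ≤ S / N
  have step3 : ∀ x, ‖h x‖ ≤ S / N := by
    intro x
    have h1 : (ZMod.dft.symm (ZMod.dft h)) x = h x := by rw [LinearEquiv.symm_apply_apply]
    have h2 := ZMod.invDFT_apply (ZMod.dft h) x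
    rw [h1] at h2
    rw [h2, smul_eq_mul, norm_mul, norm_inv]
    have hNabs : ‖(N : ℂ)‖ = N := by
      rw [Complex.norm_natCast]
    rw [hNabs, div_eq_inv_mul]
    have hbound : ‖∑ j, ZMod.stdAddChar (j * x) • ZMod.dft h j‖ ≤ S := by
      refine (norm_sum_le _ _).trans ?_
      rw [hS]
      refine Finset.sum_le_sum fun j _ => ?_
      rw [smul_eq_mul, norm_mul, ZMod.stdAddChar_apply, Circle.norm_coe, one_mul, hH]
    exact mul_le_mul_of_nonneg_left hbound (inv_nonneg.mpr hN.le)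
  have hSnn : 0 ≤ S := Finset.sum_nonneg fun ω _ => (norm_nonneg _)
  have hTS : T ≤ (M.card : ℝ) * (S / N) := by
    rw [hT]
    calc ∑ x ∈ M, ‖h x‖ ≤ ∑ _x ∈ M, S / N :=
          Finset.sum_le_sum fun x _ => step3 x
      _ = (M.card : ℝ) * (S / N) := by rw [Finset.sum_const, nsmul_eq_mul]
  have hAT : A ≤ (E.card : ℝ) * T := by
    rw [hA]
    calc ∑ ω ∈ E, ‖H ω‖ ≤ ∑ _ω ∈ E, T := Finset.sum_le_sum fun ω _ => step2 ω
      _ = (E.card : ℝ) * T := by rw [Finset.sum_const, nsmul_eq_mul]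
  have hS0 : S = 0 := by
    by_contra hne
    have hSpos : 0 < S := lt_of_le_of_ne hSnn (Ne.symm hne)
    have h3 : A ≤ (E.card : ℝ) * ((M.card : ℝ) * (S / N)) :=
      hAT.trans (mul_le_mul_of_nonneg_left hTS (Nat.cast_nonneg _))
    rw [← mul_assoc] at h3
    have h4 : (E.card : ℝ) * M.card * (S / N) < (N / 2) * (S / N) :=
      mul_lt_mul_of_pos_right hEM (div_pos hSpos hN)
    have h5 : ((N:ℝ) / 2) * (S / N) = S / 2 := by
      field_simp
    linarith [step1, hSAB]
  funext x
  have hle := step3 x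
  rw [hS0, zero_div] at hle
  have h0 : h x = 0 := by
    have h6 := le_antisymm hle (norm_nonneg _)
    rwa [norm_eq_zero] at h6
  have h7 : g x - f x = 0 := h0
  exact sub_eq_zero.mp h7
end

section
/- (Deterministic core of random Logan) Let f: Z_N → C, M, S ⊆ Z_N, ε ≥ 0 with ||f̂||_{L^1(S^c)} ≤ (ε/N)||f̂||_{L^1(Z_N)}. Suppose g agrees with f off M, ||ĝ||_{L^1(Z_N)} ≤ ||f̂||_{L^1(Z_N)}, and h = f − g (supported in M) satisfies the inequality ||ĥ||_{L^1(S)} ≤ |S|^{1/2} N^{-1/2} K ||ĥ||_{L^1(Z_N)} for some K > 0 with 2|S|^{1/2} N^{-1/2} K ≤ 1/2. Then ||ĥ||_{L^1(Z_N)} ≤ (4ε/N)·||f̂||_{L^1(Z_N)}. -/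
open Finset

lemma dft_sub {N : ℕ} [NeZero N] (f g : ZMod N → ℂ) (ω : ZMod N) :
    dft (f - g) ω = dft f ω - dft g ω := by
  simp only [dft, Pi.sub_apply, sub_mul, Finset.sum_sub_distrib, mul_sub]

lemma l1_split {N : ℕ} [NeZero N] (S : Finset (ZMod N)) (u : ZMod N → ℂ) :
    l1 univ u = l1 S u + l1 Sᶜ u := by
  simp [l1, Finset.sum_add_sum_compl]

lemma l1_nonneg {N : ℕ} [NeZero N] (A : Finset (ZMod N)) (u : ZMod N → ℂ) :
    0 ≤ l1 A u := Finset.sum_nonneg fun _ _ => norm_nonneg _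

/-- Deterministic core of random Logan. -/
theorem stmt12 {N : ℕ} [NeZero N] (f g : ZMod N → ℂ) (M S : Finset (ZMod N))
    (ε K : ℝ) (hε : 0 ≤ ε) (hK : 0 < K)
    (hconc : l1 Sᶜ (dft f) ≤ ε / N * l1 univ (dft f))
    (hagree : ∀ x ∉ M, g x = f x)
    (hmin : l1 univ (dft g) ≤ l1 univ (dft f))
    (hTal : l1 S (dft (f - g)) ≤
      Real.sqrt S.card * (Real.sqrt N)⁻¹ * K * l1 univ (dft (f - g)))
    (hsmall : 2 * Real.sqrt S.card * (Real.sqrt N)⁻¹ * K ≤ 1 / 2) :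
    l1 univ (dft (f - g)) ≤ 4 * ε / N * l1 univ (dft f) := by
  set h := f - g with hh
  set a := l1 S (dft f)
  set b := l1 Sᶜ (dft f)
  set c := l1 S (dft g)
  set d := l1 Sᶜ (dft g)
  set s := l1 S (dft h)
  set t := l1 Sᶜ (dft h)
  set δ := Real.sqrt S.card * (Real.sqrt N)⁻¹ * K with hδ
  -- pointwise triangle inequalities
  have h1 : a ≤ c + s := by
    simp only [a, c, s, l1, ← Finset.sum_add_distrib]
    refine Finset.sum_le_sum fun x _ => ?_
    have : dft f x = dft g x + dft h x := by rw [dft_sub]; ring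
    rw [this]; exact norm_add_le _ _
  have h2 : t ≤ d + b := by
    simp only [t, d, b, l1, ← Finset.sum_add_distrib]
    refine Finset.sum_le_sum fun x _ => ?_
    have : dft h x = dft g x * (-1) + dft f x := by rw [dft_sub]; ring
    rw [this]
    calc ‖dft g x * (-1) + dft f x‖
        ≤ ‖dft g x * (-1)‖ + ‖dft f x‖ := norm_add_le _ _
      _ = ‖dft g x‖ + ‖dft f x‖ := by simp
  have hsplitF := l1_split S (dft f)
  have hsplitG := l1_split S (dft g)
  have hsplitH := l1_split S (dft h)
  have hb : b ≤ ε / N * (a + b) := by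
    have := hconc
    rwa [hsplitF] at this
  have hcd : c + d ≤ a + b := by rw [← hsplitF, ← hsplitG]; exact hmin
  have hTal' : s ≤ δ * (s + t) := by rwa [hsplitH] at hTal
  have key : s + t ≤ 2 * δ * (s + t) + 2 * (ε / N * (a + b)) := by
    have : s + t ≤ 2 * s + 2 * b := by nlinarith
    nlinarith
  have hN : (0 : ℝ) < N := by
    exact_mod_cast Nat.pos_of_ne_zero (NeZero.ne N)
  have hab : 0 ≤ a + b := add_nonneg (l1_nonneg _ _) (l1_nonneg _ _)
  have hst : 0 ≤ s + t := add_nonneg (l1_nonneg _ _) (l1_nonneg _ _)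
  have hδ2 : 2 * δ ≤ 1 / 2 := by rw [hδ]; linarith [hsmall]
  have hεN : 0 ≤ ε / N := div_nonneg hε hN.le
  have final : s + t ≤ 4 * (ε / N) * (a + b) := by nlinarith
  rw [hsplitH, hsplitF]
  calc s + t ≤ 4 * (ε / N) * (a + b) := final
    _ = 4 * ε / N * (a + b) := by ring
end
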